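/- The closure of B₁ in the space H(A₁) equals the standard middle-thirds Cantor set C; this closure, with the subspace topology inherited from H(A₁), is homeomorphic to C with the Euclidean topology; and the set (closure of B₁ in H(A₁)) \ B₁, with the subspace topology inherited from H(A₁), is homeomorphic to the space of irrational numbers ℝ \ ℚ with its usual (Euclidean) topology. -/

import Mathlib

open Set TopologicalSpace Topology

def hattori (A : Set ℝ) : TopologicalSpace ℝ :=
  TopologicalSpace.generateFrom
    ({s : Set ℝ | IsOpen s} ∪ {s : Set ℝ | ∃ x ∉ A, ∃ ε > 0, s = Set.Ico x (x + ε)})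

def B1 : Set ℝ :=
  {x | ∃ n : ℕ, ∃ c : ℕ → ℝ, (∀ i, c i = 0 ∨ c i = 2) ∧
    x = ∑ i ∈ Finset.range n, c i / 3 ^ (i + 1)}

def A1 : Set ℝ := B1ᶜ

namespace HP

def lev (n : ℕ) : Set ℝ :=
  {x | ∃ c : ℕ → ℝ, (∀ i, c i = 0 ∨ c i = 2) ∧ x = ∑ i ∈ Finset.range n, c i / 3 ^ (i + 1)}

lemma B1_eq : B1 = ⋃ n, lev n := by
  ext x; simp only [B1, lev, mem_setOf_eq, mem_iUnion]

lemma zero_mem_lev (n : ℕ) : (0:ℝ) ∈ lev n :=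
  ⟨fun _ => 0, fun _ => Or.inl rfl, by simp⟩

lemma lev_zero {y : ℝ} (hy : y ∈ lev 0) : y = 0 := by
  obtain ⟨c, _, rfl⟩ := hy; simp

lemma geom (n : ℕ) : ∑ i ∈ Finset.range n, (2:ℝ) / 3 ^ (i + 1) = 1 - (1/3:ℝ)^n := by
  induction n with
  | zero => simp
  | succ n ih => rw [Finset.sum_range_succ, ih, div_pow, one_pow, div_pow, one_pow, pow_succ]; field_simp; ring

lemma lev_bounds {n : ℕ} {y : ℝ} (hy : y ∈ lev n) : 0 ≤ y ∧ y ≤ 1 - (1/3:ℝ)^n := by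
  obtain ⟨c, hc, rfl⟩ := hy
  constructor
  · refine Finset.sum_nonneg fun i _ => ?_
    rcases hc i with h | h <;> rw [h] <;> positivity
  · rw [← geom n]
    refine Finset.sum_le_sum fun i _ => ?_
    have h3 : (0:ℝ) < 3 ^ (i+1) := by positivity
    rcases hc i with h | h <;> rw [h]
    all_goals first
      | (rw [zero_div]; positivity)
      | exact le_rfl

lemma lev_succ_cases {n : ℕ} {y : ℝ} (hy : y ∈ lev (n+1)) :
    ∃ y' ∈ lev n, y = y'/3 ∨ y = (2+y')/3 := by
  obtain ⟨c, hc, rfl⟩ := hy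
  refine ⟨∑ i ∈ Finset.range n, c (i+1) / 3^(i+1),
    ⟨fun i => c (i+1), fun i => hc (i+1), rfl⟩, ?_⟩
  have key : ∑ i ∈ Finset.range (n+1), c i / 3^(i+1)
      = (∑ i ∈ Finset.range n, c (i+1) / 3^(i+1))/3 + c 0 / 3 := by
    rw [Finset.sum_range_succ', Finset.sum_div]
    congr 1
    · refine Finset.sum_congr rfl fun i _ => ?_
      rw [pow_succ, ← div_div]
    · norm_num
  rcases hc 0 with h | h
  · left; rw [key, h]; ring
  · right; rw [key, h]; ring

lemma shift_sum (c : ℕ → ℝ) (n : ℕ) (d : ℝ) :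
    ∑ i ∈ Finset.range (n+1), (if i = 0 then d else c (i-1)) / 3 ^ (i + 1)
      = d/3 + (∑ i ∈ Finset.range n, c i / 3 ^ (i+1))/3 := by
  have h1 : ∀ i ∈ Finset.range n,
      (if i+1 = 0 then d else c (i+1-1)) / 3 ^ (i+1+1) = c i / 3^(i+1) / 3 := by
    intro i _
    rw [if_neg (Nat.succ_ne_zero i), Nat.add_sub_cancel, pow_succ, ← div_div]
  rw [Finset.sum_range_succ', Finset.sum_congr rfl h1, ← Finset.sum_div, if_pos rfl]
  have h2 : (3:ℝ) ^ (0+1) = 3 := by norm_num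
  rw [h2, add_comm]

lemma lev_scale {n : ℕ} {y : ℝ} (hy : y ∈ lev n) :
    y/3 ∈ lev (n+1) ∧ (2+y)/3 ∈ lev (n+1) := by
  obtain ⟨c, hc, rfl⟩ := hy
  constructor
  · refine ⟨fun i => if i = 0 then 0 else c (i-1),
      fun i => by dsimp only; split
                  · exact Or.inl rfl
                  · exact hc _, ?_⟩
    rw [shift_sum c n 0]
    norm_num
  · refine ⟨fun i => if i = 0 then 2 else c (i-1),
      fun i => by dsimp only; split
                  · exact Or.inr rfl
                  · exact hc _, ?_⟩
    rw [shift_sum c n 2]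
    ring

lemma pre_subset_unit : ∀ n, preCantorSet n ⊆ Icc (0:ℝ) 1 := by
  intro n
  induction n with
  | zero => exact fun x hx => hx
  | succ n ih =>
    rintro x (⟨y, hy, rfl⟩ | ⟨y, hy, rfl⟩) <;>
      obtain ⟨h0, h1⟩ := ih hy <;> constructor <;> dsimp only <;> linarith

/-- Key structure lemma: any point of `preCantorSet n` is either ≤ y - 3⁻ⁿ,
in `[y, y + 3⁻ⁿ]`, or ≥ y + 2·3⁻ⁿ, for any level-n endpoint y.  -/
lemma LR : ∀ n, ∀ y ∈ lev n, ∀ z ∈ preCantorSet n,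
    z ≤ y - (1/3:ℝ)^n ∨ (y ≤ z ∧ z ≤ y + (1/3:ℝ)^n) ∨ y + 2*(1/3:ℝ)^n ≤ z := by
  intro n
  induction n with
  | zero =>
    intro y hy z hz
    obtain rfl := lev_zero hy
    obtain ⟨h0, h1⟩ := pre_subset_unit 0 hz
    right; left; norm_num; exact ⟨h0, h1⟩
  | succ n ih =>
    intro y hy z hz
    have hp : (0:ℝ) < (1/3:ℝ)^n := by positivity
    obtain ⟨y', hy', hcase⟩ := lev_succ_cases hy
    obtain ⟨hy'0, hy'1⟩ := lev_bounds hy'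
    have hps : ((1:ℝ)/3)^(n+1) = (1/3:ℝ)^n/3 := by rw [pow_succ]; ring
    rcases hz with ⟨w, hw, rfl⟩ | ⟨w, hw, rfl⟩ <;>
      obtain ⟨hw0, hw1⟩ := pre_subset_unit n hw <;>
      rcases hcase with rfl | rfl
    · rcases ih y' hy' w hw with h | ⟨h1, h2⟩ | h
      · left; dsimp only; rw [hps]; linarith
      · right; left; dsimp only; rw [hps]; constructor <;> linarith
      · right; right; dsimp only; rw [hps]; linarith
    · left; dsimp only; rw [hps]; linarith
    · right; right; dsimp only; rw [hps]; linarith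
    · rcases ih y' hy' w hw with h | ⟨h1, h2⟩ | h
      · left; dsimp only; rw [hps]; linarith
      · right; left; dsimp only; rw [hps]; constructor <;> linarith
      · right; right; dsimp only; rw [hps]; linarith

lemma cantor_scale {x : ℝ} (hx : x ∈ cantorSet) :
    x/3 ∈ cantorSet ∧ (2+x)/3 ∈ cantorSet := by
  obtain ⟨h0, h1⟩ := cantorSet_subset_unitInterval hx
  constructor
  · refine mem_iInter.mpr fun n => ?_
    cases n with
    | zero => exact Set.mem_Icc.mpr ⟨by linarith, by linarith⟩
    | succ n => exact Or.inl ⟨x, mem_iInter.mp hx n, rfl⟩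
  · refine mem_iInter.mpr fun n => ?_
    cases n with
    | zero => exact Set.mem_Icc.mpr ⟨by linarith, by linarith⟩
    | succ n => exact Or.inr ⟨x, mem_iInter.mp hx n, rfl⟩

lemma lev_subset_cantor : ∀ n, lev n ⊆ cantorSet := by
  intro n
  induction n with
  | zero => intro y hy; rw [lev_zero hy]; exact zero_mem_cantorSet
  | succ n ih =>
    intro y hy
    obtain ⟨y', hy', hc⟩ := lev_succ_cases hy
    rcases hc with rfl | rfl
    · exact (cantor_scale (ih hy')).1
    · exact (cantor_scale (ih hy')).2

lemma B1_subset_cantor : B1 ⊆ cantorSet := by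
  rw [B1_eq]; exact iUnion_subset fun n => lev_subset_cantor n

lemma near : ∀ n, ∀ x ∈ preCantorSet n, ∃ b ∈ lev n, b ≤ x ∧ x ≤ b + (1/3:ℝ)^n := by
  intro n
  induction n with
  | zero => exact fun x hx => ⟨0, zero_mem_lev 0, by simpa using hx.1, by simpa using hx.2⟩
  | succ n ih =>
    rintro x (⟨y, hy, rfl⟩ | ⟨y, hy, rfl⟩) <;> obtain ⟨b, hb, hb1, hb2⟩ := ih y hy
    · exact ⟨b/3, (lev_scale hb).1, by dsimp only; linarith,
        by dsimp only; rw [pow_succ]; nlinarith⟩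
    · exact ⟨(2+b)/3, (lev_scale hb).2, by dsimp only; linarith,
        by dsimp only; rw [pow_succ]; nlinarith⟩

-- c2: hattori topology lemmas, Part 1 and Part 2

lemma hattori_le (A : Set ℝ) : hattori A ≤ (inferInstance : TopologicalSpace ℝ) := by
  conv_rhs => rw [← TopologicalSpace.generateFrom_setOf_isOpen (inferInstance : TopologicalSpace ℝ)]
  exact TopologicalSpace.generateFrom_anti subset_union_left

lemma isOpen_hattori {A : Set ℝ} {s : Set ℝ} (hs : IsOpen s) : IsOpen[hattori A] s :=
  TopologicalSpace.GenerateOpen.basic s (Or.inl hs)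

lemma mem_B1_of_not_A1 {y : ℝ} (hy : y ∉ A1) : y ∈ B1 := by
  simpa [A1] using hy

lemma hattori_nhd {x : ℝ} (hx : x ∉ B1) :
    ∀ o : Set ℝ, IsOpen[hattori A1] o → x ∈ o → ∃ δ > 0, Ioo (x-δ) (x+δ) ⊆ o := by
  intro o ho
  change TopologicalSpace.GenerateOpen _ o at ho
  induction ho with
  | basic s hs =>
    intro hxs
    rcases hs with hs | ⟨y, hy, ε, hε, rfl⟩
    · replace hs : IsOpen s := hs
      obtain ⟨δ, hδ, hball⟩ := Metric.isOpen_iff.mp hs x hxs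
      exact ⟨δ, hδ, by rw [← Real.ball_eq_Ioo]; exact hball⟩
    · have hyB : y ∈ B1 := mem_B1_of_not_A1 hy
      have hxy : y < x := lt_of_le_of_ne hxs.1 (by rintro rfl; exact hx hyB)
      refine ⟨min (x - y) (y + ε - x), by simp [hxy, hxs.2], ?_⟩
      rintro z ⟨hz1, hz2⟩
      constructor
      · have := min_le_left (x - y) (y + ε - x); linarith
      · have := min_le_right (x - y) (y + ε - x); linarith
  | univ => exact fun _ => ⟨1, one_pos, fun _ _ => trivial⟩
  | inter s t _ _ ihs iht =>
    intro hxs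
    obtain ⟨δ1, hδ1, h1⟩ := ihs hxs.1
    obtain ⟨δ2, hδ2, h2⟩ := iht hxs.2
    refine ⟨min δ1 δ2, lt_min hδ1 hδ2, ?_⟩
    rintro z ⟨hz1, hz2⟩
    have a1 := min_le_left δ1 δ2
    have a2 := min_le_right δ1 δ2
    exact ⟨h1 ⟨by linarith, by linarith⟩, h2 ⟨by linarith, by linarith⟩⟩
  | sUnion S _ ih =>
    rintro ⟨s, hsS, hxs⟩
    obtain ⟨δ, hδ, hsub⟩ := ih s hsS hxs
    exact ⟨δ, hδ, hsub.trans (subset_sUnion_of_mem hsS)⟩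

lemma cantor_mem_pre {x : ℝ} (hx : x ∈ cantorSet) (n : ℕ) : x ∈ preCantorSet n :=
  mem_iInter.mp hx n

theorem closure_B1 : closure[hattori A1] B1 = cantorSet := by
  apply subset_antisymm
  · have hc : IsOpen[hattori A1] cantorSetᶜ :=
      isOpen_hattori (isOpen_compl_iff.mpr isClosed_cantorSet)
    exact @closure_minimal ℝ (hattori A1) B1 cantorSet B1_subset_cantor
      (@IsClosed.mk ℝ (hattori A1) cantorSet hc)
  · intro x hx
    by_cases hxB : x ∈ B1
    · exact Set.mem_of_mem_of_subset hxB (@subset_closure ℝ (hattori A1) B1)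
    · refine (@mem_closure_iff ℝ (hattori A1) x B1).mpr fun o ho hxo => ?_
      obtain ⟨δ, hδ, hsub⟩ := hattori_nhd hxB o ho hxo
      obtain ⟨n, hn⟩ := exists_pow_lt_of_lt_one hδ (by norm_num : (1/3:ℝ) < 1)
      obtain ⟨b, hb, hb1, hb2⟩ := near n x (cantor_mem_pre hx n)
      have hp : (0:ℝ) < (1/3:ℝ)^n := by positivity
      refine ⟨b, hsub ⟨by linarith, by linarith⟩, ?_⟩
      rw [B1_eq]
      exact mem_iUnion.mpr ⟨n, hb⟩

lemma rel_open {S : Set ℝ} (hS : S ⊆ cantorSet) :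
    ∀ o : Set ℝ, IsOpen[hattori A1] o → IsOpen (((↑) : S → ℝ) ⁻¹' o) := by
  intro o ho
  change TopologicalSpace.GenerateOpen _ o at ho
  induction ho with
  | basic s hs =>
    rcases hs with hs | ⟨y, hy, ε, hε, rfl⟩
    · replace hs : IsOpen s := hs
      exact hs.preimage continuous_subtype_val
    · have hyB : y ∈ B1 := mem_B1_of_not_A1 hy
      rw [B1_eq] at hyB
      obtain ⟨n, hyn⟩ := mem_iUnion.mp hyB
      have hp : (0:ℝ) < (1/3:ℝ)^n := by positivity
      have key : (((↑) : S → ℝ) ⁻¹' Ico y (y + ε))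
          = ((↑) : S → ℝ) ⁻¹' Ioo (y - (1/3:ℝ)^n) (y + ε) := by
        ext z
        simp only [mem_preimage, mem_Ico, mem_Ioo]
        constructor
        · rintro ⟨h1, h2⟩; exact ⟨by linarith, h2⟩
        · rintro ⟨h1, h2⟩
          refine ⟨?_, h2⟩
          rcases LR n y hyn z.1 (cantor_mem_pre (hS z.2) n) with h | ⟨h, _⟩ | h
          · linarith
          · exact h
          · linarith
      rw [key]
      exact isOpen_Ioo.preimage continuous_subtype_val
  | univ => simpa using isOpen_univ
  | inter s t _ _ ihs iht => exact ihs.inter iht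
  | sUnion T _ ih =>
    rw [preimage_sUnion]
    exact isOpen_biUnion ih

lemma induced_eq {S : Set ℝ} (hS : S ⊆ cantorSet) :
    TopologicalSpace.induced ((↑) : S → ℝ) (hattori A1)
      = (instTopologicalSpaceSubtype : TopologicalSpace S) := by
  apply le_antisymm
  · exact induced_mono (hattori_le A1)
  · intro u hu
    obtain ⟨o, ho, rfl⟩ := (@isOpen_induced_iff S ℝ (hattori A1) u ((↑) : S → ℝ)).mp hu
    exact rel_open hS o ho
-- c3: general scheme-to-homeomorphism lemma

open CantorScheme PiNat

theorem scheme_homeo (A : List ℕ → Set ℝ) (T : Set ℝ)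
    (hanti : CantorScheme.ClosureAntitone A)
    (hdisj : CantorScheme.Disjoint A)
    (hdiam : CantorScheme.VanishingDiam A)
    (hne : ∀ l, (A l).Nonempty)
    (huniv : T ⊆ A [])
    (hcov : ∀ l, ∀ x, x ∈ A l → x ∈ T → ∃ a : ℕ, x ∈ A (a :: l))
    (hT : ∀ x : ((CantorScheme.inducedMap A).1 : Set (ℕ → ℕ)), (CantorScheme.inducedMap A).2 x ∈ T)
    (hrel : ∀ (a : ℕ) (l : List ℕ), ∃ u : Set ℝ, IsOpen u ∧ u ∩ T = A (a :: l) ∩ T) :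
    Nonempty ((ℕ → ℕ) ≃ₜ T) := by
  have hdom : (CantorScheme.inducedMap A).1 = univ :=
    hanti.map_of_vanishingDiam hdiam hne
  have hmem : ∀ x : ℕ → ℕ, x ∈ (CantorScheme.inducedMap A).1 := by
    rw [hdom]; exact fun x => trivial
  set f : (ℕ → ℕ) → ℝ := fun x => (CantorScheme.inducedMap A).2 ⟨x, hmem x⟩ with hf
  have fmemA : ∀ (x : ℕ → ℕ) (n : ℕ), f x ∈ A (res x n) := fun x n =>
    CantorScheme.map_mem ⟨x, hmem x⟩ n
  have fT : ∀ x, f x ∈ T := fun x => hT ⟨x, hmem x⟩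
  have finj : Function.Injective f := by
    intro x y hxy
    have h2 := hdisj.map_injective (show (CantorScheme.inducedMap A).2 ⟨x, hmem x⟩
      = (CantorScheme.inducedMap A).2 ⟨y, hmem y⟩ from hxy)
    exact congrArg Subtype.val h2
  have hpre : ∀ l₁ l₂ : List ℕ, l₁.length = l₂.length → (A l₁ ∩ A l₂).Nonempty → l₁ = l₂ := by
    intro l₁
    induction l₁ with
    | nil =>
      intro l₂ hlen _
      cases l₂ with
      | nil => rfl
      | cons b l₂ => simp at hlen
    | cons a l ih =>
      intro l₂ hlen hint
      cases l₂ with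
      | nil => simp at hlen
      | cons b l₂ =>
        obtain ⟨z, hz1, hz2⟩ := hint
        have hll : l = l₂ := ih l₂ (by simpa using hlen)
          ⟨z, hanti.antitone _ _ hz1, hanti.antitone _ _ hz2⟩
        subst hll
        by_cases hab : a = b
        · rw [hab]
        · exact absurd (hdisj l hab) (Set.not_disjoint_iff.mpr ⟨z, hz1, hz2⟩)
  have fsurj : ∀ y ∈ T, ∃ x, f x = y := by
    intro y hy
    have step : ∀ p : {l : List ℕ // y ∈ A l}, ∃ a : ℕ, y ∈ A (a :: p.1) :=
      fun p => hcov p.1 y p.2 hy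
    choose g hg using step
    let aux : ℕ → {l : List ℕ // y ∈ A l} :=
      fun n => Nat.rec ⟨[], huniv hy⟩ (fun _ p => ⟨g p :: p.1, hg p⟩) n
    have auxsucc : ∀ n, (aux (n+1)).1 = g (aux n) :: (aux n).1 := fun n => rfl
    set x : ℕ → ℕ := fun n => (aux (n+1)).1.headI with hx
    have hxg : ∀ n, x n = g (aux n) := by
      intro n
      show (↑(aux (n + 1)) : List ℕ).headI = g (aux n)
      rw [auxsucc n, List.headI_cons]
    have hres : ∀ n, res x n = (aux n).1 := by
      intro n
      induction n with
      | zero => rfl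
      | succ n ih => rw [res_succ, ih, auxsucc n, hxg n]
    have hyA : ∀ n, y ∈ A (res x n) := fun n => (hres n) ▸ (aux n).2
    refine ⟨x, ?_⟩
    have key : ∀ ε > 0, dist (f x) y < ε := by
      intro ε hε
      obtain ⟨n, hn⟩ := hdiam.dist_lt ε hε x
      exact hn _ (fmemA x n) _ (hyA n)
    by_contra hne'
    exact lt_irrefl _ (key _ (dist_pos.mpr hne'))
  let F : (ℕ → ℕ) → T := fun x => ⟨f x, fT x⟩
  have Fbij : Function.Bijective F := by
    constructor
    · intro x y hxy
      exact finj (congrArg Subtype.val hxy)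
    · rintro ⟨y, hy⟩
      obtain ⟨x, hx⟩ := fsurj y hy
      exact ⟨x, Subtype.ext hx⟩
  let E : (ℕ → ℕ) ≃ T := Equiv.ofBijective F Fbij
  have hFE : ∀ y : T, F (E.symm y) = y := fun y => E.apply_symm_apply y
  have contF : Continuous F := by
    refine Continuous.subtype_mk ?_ _
    exact hdiam.map_continuous.comp (continuous_id.subtype_mk _)
  have contG : Continuous (E.symm : T → ℕ → ℕ) := by
    have hbasis := PiNat.isTopologicalBasis_cylinders (fun _ : ℕ => ℕ)
    refine hbasis.continuous_iff.mpr ?_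
    rintro s ⟨z, n, rfl⟩
    rcases n with _ | m
    · rw [cylinder_zero]; simp
    rw [isOpen_iff_forall_mem_open]
    intro y hy
    rw [mem_preimage, cylinder_eq_res, mem_setOf] at hy
    set x := E.symm y with hxdef
    obtain ⟨u, hu, huT⟩ := hrel (x m) (res x m)
    have hvaly : (y : ℝ) = f x := (congrArg Subtype.val (hFE y)).symm
    have hresx : (x m :: res x m) = res x (m+1) := (res_succ x m).symm
    refine ⟨Subtype.val ⁻¹' u, ?_, hu.preimage continuous_subtype_val, ?_⟩
    · intro y' hy'
      set x' := E.symm y' with hx'def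
      have hy'A : (y' : ℝ) ∈ A (res x (m+1)) := by
        have h1 : (y' : ℝ) ∈ u ∩ T := ⟨hy', y'.2⟩
        rw [huT, hresx] at h1
        exact h1.1
      have hvaly' : (y' : ℝ) = f x' := (congrArg Subtype.val (hFE y')).symm
      have hy'A2 : (y' : ℝ) ∈ A (res x' (m+1)) := hvaly' ▸ fmemA x' (m+1)
      have heq : res x' (m+1) = res x (m+1) :=
        hpre _ _ (by rw [res_length, res_length]) ⟨(y' : ℝ), hy'A2, hy'A⟩
      rw [mem_preimage, cylinder_eq_res, mem_setOf]
      rw [← hx'def, heq, ← hy]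
    · rw [mem_preimage]
      have h1 : f x ∈ A (res x (m+1)) ∩ T := ⟨fmemA x (m+1), fT x⟩
      rw [← hresx, ← huT] at h1
      rw [hvaly]
      exact h1.1
  exact ⟨⟨E, contF, contG⟩⟩
-- c4 : scheme for the irrationals

def eQ : ℕ → ℚ := fun n => (Denumerable.eqv ℚ).symm n

def J : ℕ → ℤ := fun a => if Even a then ((a/2 : ℕ) : ℤ) else -((a/2 : ℕ) : ℤ) - 1

lemma J_inj : Function.Injective J := by
  intro a b hab
  unfold J at hab
  split_ifs at hab with h1 h2 h2
  · obtain ⟨i, rfl⟩ := h1; obtain ⟨j, rfl⟩ := h2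
    omega
  · omega
  · omega
  · rw [Nat.not_even_iff_odd] at h1 h2
    obtain ⟨i, rfl⟩ := h1; obtain ⟨j, rfl⟩ := h2
    omega

lemma J_surj : ∀ z : ℤ, ∃ a, J a = z := by
  intro z
  rcases le_or_gt 0 z with h | h
  · refine ⟨2 * z.toNat, ?_⟩
    unfold J
    rw [if_pos ⟨z.toNat, by ring⟩]
    omega
  · refine ⟨2 * (-z-1).toNat + 1, ?_⟩
    unfold J
    rw [if_neg (by rw [Nat.even_iff]; omega)]
    omega

def up (q m : ℚ) (k : ℕ) : ℚ := q - (q - m)/2^k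
def dn (p m : ℚ) (k : ℕ) : ℚ := p + (m - p)/2^k

lemma up_zero (q m : ℚ) : up q m 0 = m := by simp [up]
lemma dn_zero (p m : ℚ) : dn p m 0 = m := by simp [dn]

lemma up_strict {q m : ℚ} (h : m < q) (k : ℕ) : up q m k < up q m (k+1) := by
  unfold up
  have h2 : (0:ℚ) < 2^k := by positivity
  rw [pow_succ]
  have key : (q - m)/(2^k * 2) < (q - m)/2^k := by
    rw [div_lt_div_iff₀ (by positivity) h2]
    nlinarith
  linarith

lemma up_mono {q m : ℚ} (h : m < q) : StrictMono (up q m) :=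
  strictMono_nat_of_lt_succ (up_strict h)

lemma up_lb {q m : ℚ} (h : m < q) (k : ℕ) : m ≤ up q m k := by
  have h0 := (up_mono h).monotone (Nat.zero_le k)
  rwa [up_zero] at h0

lemma up_ub {q m : ℚ} (h : m < q) (k : ℕ) : up q m k < q := by
  unfold up
  have h1 : (0:ℚ) < q - m := sub_pos.mpr h
  have h2 : (0:ℚ) < (2:ℚ)^k := by positivity
  have := div_pos h1 h2
  linarith

lemma dn_strict {p m : ℚ} (h : p < m) (k : ℕ) : dn p m (k+1) < dn p m k := by
  unfold dn
  have h2 : (0:ℚ) < 2^k := by positivity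
  rw [pow_succ]
  have key : (m - p)/(2^k * 2) < (m - p)/2^k := by
    rw [div_lt_div_iff₀ (by positivity) h2]
    nlinarith
  linarith

lemma dn_anti {p m : ℚ} (h : p < m) : StrictAnti (dn p m) :=
  strictAnti_nat_of_succ_lt (dn_strict h)

lemma dn_ub {p m : ℚ} (h : p < m) (k : ℕ) : dn p m k ≤ m := by
  have h0 := (dn_anti h).antitone (Nat.zero_le k)
  rwa [dn_zero] at h0

lemma dn_lb {p m : ℚ} (h : p < m) (k : ℕ) : p < dn p m k := by
  unfold dn
  have h1 : (0:ℚ) < m - p := sub_pos.mpr h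
  have h2 : (0:ℚ) < (2:ℚ)^k := by positivity
  have := div_pos h1 h2
  linarith

def mids (p q : ℚ) (n : ℕ) : ℚ := if p < eQ n ∧ eQ n < q then eQ n else (p+q)/2

lemma mids_mem {p q : ℚ} (h : p < q) (n : ℕ) : p < mids p q n ∧ mids p q n < q := by
  unfold mids
  split_ifs with h1
  · exact h1
  · constructor <;> linarith

def chl (p q : ℚ) (n : ℕ) (a : ℕ) : ℚ × ℚ :=
  if Even a then (up q (mids p q n) (a/2), up q (mids p q n) (a/2+1))
  else (dn p (mids p q n) (a/2+1), dn p (mids p q n) (a/2))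

def seg : List ℕ → ℚ × ℚ
  | [] => (0, 1)
  | [a] => (eQ 0 + (J a : ℚ), eQ 0 + (J a : ℚ) + 1)
  | a :: b :: l => chl (seg (b :: l)).1 (seg (b :: l)).2 (b :: l).length a

def AI : List ℕ → Set ℝ := fun l =>
  if l = [] then univ else Ioo ((seg l).1 : ℝ) ((seg l).2 : ℝ)

lemma AI_nil : AI [] = univ := rfl

lemma AI_cons (a : ℕ) (l : List ℕ) :
    AI (a :: l) = Ioo ((seg (a :: l)).1 : ℝ) ((seg (a :: l)).2 : ℝ) := by
  unfold AI
  rw [if_neg (List.cons_ne_nil a l)]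

lemma chl_valid {p q : ℚ} (h : p < q) (n a : ℕ) : (chl p q n a).1 < (chl p q n a).2 := by
  obtain ⟨h1, h2⟩ := mids_mem h n
  unfold chl
  split_ifs
  · exact up_strict h2 _
  · exact dn_strict h1 _

lemma seg_valid : ∀ l : List ℕ, l ≠ [] → (seg l).1 < (seg l).2 := by
  intro l
  induction l with
  | nil => intro h; exact absurd rfl h
  | cons a l ih =>
    intro _
    cases l with
    | nil => show eQ 0 + (J a : ℚ) < eQ 0 + (J a : ℚ) + 1; linarith
    | cons b l' =>
      show (chl (seg (b :: l')).1 (seg (b :: l')).2 (b :: l').length a).1 < _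
      exact chl_valid (ih (List.cons_ne_nil b l')) _ _

lemma chl_inside {p q : ℚ} (h : p < q) (n a : ℕ) :
    p < (chl p q n a).1 ∧ (chl p q n a).2 < q := by
  obtain ⟨h1, h2⟩ := mids_mem h n
  unfold chl
  split_ifs
  · exact ⟨lt_of_lt_of_le h1 (up_lb h2 _), up_ub h2 _⟩
  · exact ⟨dn_lb h1 _, lt_of_le_of_lt (dn_ub h1 _) h2⟩

lemma chl_len {p q : ℚ} (h : p < q) (n a : ℕ) :
    (chl p q n a).2 - (chl p q n a).1 ≤ (q - p)/2 := by
  obtain ⟨h1, h2⟩ := mids_mem h n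
  set m := mids p q n with hm
  have h2k : (1:ℚ) ≤ 2^(a/2) := one_le_pow₀ (by norm_num)
  have h2k' : (0:ℚ) < 2^(a/2) := by positivity
  unfold chl
  split_ifs with he
  · show up q m (a/2+1) - up q m (a/2) ≤ _
    have hlen : up q m (a/2+1) - up q m (a/2) = (q-m)/2^(a/2+1) := by
      unfold up
      rw [pow_succ]
      field_simp
      ring
    rw [hlen]
    have k1 : (q-m)/2^(a/2+1) ≤ (q-m)/2 := by
      rw [div_le_div_iff₀ (by positivity) (by norm_num)]
      rw [pow_succ]
      nlinarith
    linarith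
  · show dn p m (a/2) - dn p m (a/2+1) ≤ _
    have hlen : dn p m (a/2) - dn p m (a/2+1) = (m-p)/2^(a/2+1) := by
      unfold dn
      rw [pow_succ]
      field_simp
      ring
    rw [hlen]
    have k1 : (m-p)/2^(a/2+1) ≤ (m-p)/2 := by
      rw [div_le_div_iff₀ (by positivity) (by norm_num)]
      rw [pow_succ]
      nlinarith
    linarith

lemma chl_disj {p q : ℚ} (h : p < q) (n : ℕ) {a b : ℕ} (hab : a ≠ b) :
    (chl p q n a).2 ≤ (chl p q n b).1 ∨ (chl p q n b).2 ≤ (chl p q n a).1 := by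
  obtain ⟨h1, h2⟩ := mids_mem h n
  set m := mids p q n
  unfold chl
  split_ifs with hea heb heb
  · obtain ⟨i, rfl⟩ := hea
    obtain ⟨j, rfl⟩ := heb
    have hij : i ≠ j := by omega
    have d1 : (i+i)/2 = i := by omega
    have d2 : (j+j)/2 = j := by omega
    simp only
    rw [d1, d2]
    rcases lt_or_gt_of_ne hij with hlt | hlt
    · exact Or.inl ((up_mono h2).monotone (by omega))
    · exact Or.inr ((up_mono h2).monotone (by omega))
  · exact Or.inr (le_trans (dn_ub h1 _) (up_lb h2 _))
  · exact Or.inl (le_trans (dn_ub h1 _) (up_lb h2 _))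
  · rw [Nat.not_even_iff_odd] at hea heb
    obtain ⟨i, rfl⟩ := hea
    obtain ⟨j, rfl⟩ := heb
    have hij : i ≠ j := by omega
    have d1 : (2*i+1)/2 = i := by omega
    have d2 : (2*j+1)/2 = j := by omega
    simp only
    rw [d1, d2]
    rcases lt_or_gt_of_ne hij with hlt | hlt
    · exact Or.inr ((dn_anti h1).antitone (by omega))
    · exact Or.inl ((dn_anti h1).antitone (by omega))

lemma seg_inside : ∀ (a : ℕ) (l : List ℕ), l ≠ [] →
    (seg l).1 < (seg (a :: l)).1 ∧ (seg (a :: l)).2 < (seg l).2 := by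
  intro a l hl
  cases l with
  | nil => exact absurd rfl hl
  | cons b l' =>
    exact chl_inside (seg_valid _ (List.cons_ne_nil b l')) _ a

lemma seg_len : ∀ (l : List ℕ) (a : ℕ),
    (seg (a :: l)).2 - (seg (a :: l)).1 ≤ (1/2:ℚ)^l.length := by
  intro l
  induction l with
  | nil => intro a; show eQ 0 + (J a : ℚ) + 1 - (eQ 0 + (J a : ℚ)) ≤ (1/2:ℚ)^([] : List ℕ).length; norm_num
  | cons b l' ih =>
    intro a
    have hv : (seg (b :: l')).1 < (seg (b :: l')).2 := seg_valid _ (List.cons_ne_nil b l')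
    have hch := chl_len hv (b :: l').length a
    have hbl := ih b
    show (chl (seg (b :: l')).1 (seg (b :: l')).2 (b :: l').length a).2 - _ ≤ _
    calc _ ≤ ((seg (b :: l')).2 - (seg (b :: l')).1)/2 := hch
    _ ≤ ((1/2:ℚ)^l'.length)/2 := by linarith
    _ = (1/2:ℚ)^(b :: l').length := by
        rw [List.length_cons, pow_succ]
        ring

lemma AI_closureAntitone : CantorScheme.ClosureAntitone AI := by
  intro l a
  cases l with
  | nil => rw [AI_nil]; exact subset_univ _
  | cons b l' =>
    rw [AI_cons, AI_cons]
    have hv : (seg (a :: b :: l')).1 < (seg (a :: b :: l')).2 :=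
      seg_valid _ (List.cons_ne_nil _ _)
    have hvr : ((seg (a :: b :: l')).1 : ℝ) < ((seg (a :: b :: l')).2 : ℝ) := by
      exact_mod_cast hv
    have hin := seg_inside a (b :: l') (List.cons_ne_nil b l')
    rw [closure_Ioo (ne_of_lt hvr)]
    intro x hx
    obtain ⟨hx1, hx2⟩ := hx
    constructor
    · calc ((seg (b :: l')).1 : ℝ) < ((seg (a :: b :: l')).1 : ℝ) := by exact_mod_cast hin.1
      _ ≤ x := hx1
    · calc x ≤ ((seg (a :: b :: l')).2 : ℝ) := hx2
      _ < ((seg (b :: l')).2 : ℝ) := by exact_mod_cast hin.2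

lemma AI_disjoint : CantorScheme.Disjoint AI := by
  intro l a b hab
  rw [Set.disjoint_left]
  intro x hxa hxb
  rw [AI_cons] at hxa hxb
  cases l with
  | nil =>
    have e1a : (seg [a]).1 = eQ 0 + (J a : ℚ) := rfl
    have e2a : (seg [a]).2 = eQ 0 + (J a : ℚ) + 1 := rfl
    have e1b : (seg [b]).1 = eQ 0 + (J b : ℚ) := rfl
    have e2b : (seg [b]).2 = eQ 0 + (J b : ℚ) + 1 := rfl
    have h1 := hxa.1
    have h2 := hxa.2
    have h3 := hxb.1
    have h4 := hxb.2
    rw [e1a] at h1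
    rw [e2a] at h2
    rw [e1b] at h3
    rw [e2b] at h4
    push_cast at h1 h2 h3 h4
    have hJ : J a ≠ J b := fun h => hab (J_inj h)
    rcases lt_or_gt_of_ne hJ with h | h
    · have h5 : ((J a : ℝ)) + 1 ≤ (J b : ℝ) := by exact_mod_cast Int.add_one_le_iff.mpr h
      linarith
    · have h5 : ((J b : ℝ)) + 1 ≤ (J a : ℝ) := by exact_mod_cast Int.add_one_le_iff.mpr h
      linarith
  | cons c l' =>
    have hv : (seg (c :: l')).1 < (seg (c :: l')).2 := seg_valid _ (List.cons_ne_nil c l')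
    have hd := chl_disj hv (c :: l').length hab
    have h1 := hxa.1
    have h2 := hxa.2
    have h3 := hxb.1
    have h4 := hxb.2
    simp only [seg] at h1 h2 h3 h4
    rcases hd with h | h
    · have : ((chl (seg (c :: l')).1 (seg (c :: l')).2 (c :: l').length a).2 : ℝ)
          ≤ ((chl (seg (c :: l')).1 (seg (c :: l')).2 (c :: l').length b).1 : ℝ) := by
        exact_mod_cast h
      linarith
    · have : ((chl (seg (c :: l')).1 (seg (c :: l')).2 (c :: l').length b).2 : ℝ)
          ≤ ((chl (seg (c :: l')).1 (seg (c :: l')).2 (c :: l').length a).1 : ℝ) := by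
        exact_mod_cast h
      linarith

lemma AI_vanishing : CantorScheme.VanishingDiam AI := by
  intro x
  have hbound : ∀ n : ℕ, Metric.ediam (AI (PiNat.res x (n+1)))
      ≤ ENNReal.ofReal ((1/2:ℝ)^n) := by
    intro n
    rw [PiNat.res_succ, AI_cons]
    rw [Real.ediam_Ioo]
    apply ENNReal.ofReal_le_ofReal
    have := seg_len (PiNat.res x n) (x n)
    have hlen : (PiNat.res x n).length = n := PiNat.res_length x n
    rw [hlen] at this
    have : ((seg (x n :: PiNat.res x n)).2 - (seg (x n :: PiNat.res x n)).1 : ℚ)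
        ≤ ((1/2:ℚ)^n) := this
    calc ((seg (x n :: PiNat.res x n)).2 : ℝ) - ((seg (x n :: PiNat.res x n)).1 : ℝ)
        = (((seg (x n :: PiNat.res x n)).2 - (seg (x n :: PiNat.res x n)).1 : ℚ) : ℝ) := by
          push_cast; ring
      _ ≤ (((1/2:ℚ)^n : ℚ) : ℝ) := by exact_mod_cast this
      _ = (1/2:ℝ)^n := by push_cast; ring
  have htend : Filter.Tendsto (fun n : ℕ => ENNReal.ofReal ((1/2:ℝ)^(n-1)))
      Filter.atTop (nhds 0) := by
    rw [show (0 : ENNReal) = ENNReal.ofReal 0 from (ENNReal.ofReal_zero).symm]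
    apply ENNReal.tendsto_ofReal
    have h1 : Filter.Tendsto (fun n : ℕ => (1/2:ℝ)^n) Filter.atTop (nhds 0) :=
      tendsto_pow_atTop_nhds_zero_of_lt_one (by norm_num) (by norm_num)
    exact h1.comp (Filter.tendsto_sub_atTop_nat 1)
  apply tendsto_of_tendsto_of_tendsto_of_le_of_le' tendsto_const_nhds htend
  · exact Filter.Eventually.of_forall fun n => zero_le
  · rw [Filter.eventually_atTop]
    refine ⟨1, fun n hn => ?_⟩
    obtain ⟨m, rfl⟩ := Nat.exists_eq_add_of_le hn
    have := hbound m
    rw [show 1 + m - 1 = m from by omega]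
    rw [show 1 + m = m + 1 from by omega]
    exact this

lemma cast_up (q m : ℚ) (k : ℕ) : ((up q m k : ℚ) : ℝ) = (q:ℝ) - ((q:ℝ)-(m:ℝ))/2^k := by
  unfold up; push_cast; ring

lemma cast_dn (p m : ℚ) (k : ℕ) : ((dn p m k : ℚ) : ℝ) = (p:ℝ) + ((m:ℝ)-(p:ℝ))/2^k := by
  unfold dn; push_cast; ring

lemma exists_up_index {q m : ℚ} {x : ℝ} (hm : m < q) (hx1 : (m:ℝ) < x) (hx2 : x < (q:ℝ))
    (hirr : Irrational x) : ∃ k, ((up q m k : ℚ) : ℝ) < x ∧ x < ((up q m (k+1) : ℚ) : ℝ) := by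
  have hq : (0:ℝ) < (q:ℝ) - x := by linarith
  have hqm : (0:ℝ) < (q:ℝ) - (m:ℝ) := by exact_mod_cast sub_pos.mpr hm
  obtain ⟨k0, hk0⟩ := exists_pow_lt_of_lt_one (show (0:ℝ) < ((q:ℝ)-x)/((q:ℝ)-(m:ℝ)) by positivity)
    (show (1/2:ℝ) < 1 by norm_num)
  have hP0 : x < ((up q m k0 : ℚ) : ℝ) := by
    have hhalf : ((1:ℝ)/2)^k0 = 1/2^k0 := by rw [div_pow, one_pow]
    have hlt : ((q:ℝ)-(m:ℝ)) * ((1/2:ℝ)^k0) < ((q:ℝ)-(m:ℝ)) * (((q:ℝ)-x)/((q:ℝ)-(m:ℝ))) :=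
      mul_lt_mul_of_pos_left hk0 hqm
    have heq1 : ((q:ℝ)-(m:ℝ)) * (((q:ℝ)-x)/((q:ℝ)-(m:ℝ))) = (q:ℝ)-x := by
      field_simp
    have heq2 : ((q:ℝ)-(m:ℝ)) * ((1/2:ℝ)^k0) = ((q:ℝ)-(m:ℝ))/2^k0 := by
      rw [hhalf]; ring
    have h9 : ((q:ℝ)-(m:ℝ))/2^k0 < (q:ℝ) - x := by
      rw [← heq2, ← heq1]; exact hlt
    rw [cast_up]
    linarith
  have hex : ∃ k, x < ((up q m k : ℚ) : ℝ) := ⟨k0, hP0⟩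
  classical
  have hK0 : Nat.find hex ≠ 0 := by
    intro h
    have hs := Nat.find_spec hex
    rw [h, up_zero] at hs
    linarith
  obtain ⟨k, hk⟩ := Nat.exists_eq_succ_of_ne_zero hK0
  have hKP : x < ((up q m (k+1) : ℚ) : ℝ) := by
    have := Nat.find_spec hex
    rwa [hk] at this
  have hkm : ¬ x < ((up q m k : ℚ) : ℝ) :=
    Nat.find_min hex (show k < Nat.find hex by rw [hk]; exact Nat.lt_succ_self k)
  push_neg at hkm
  have hne : ((up q m k : ℚ) : ℝ) ≠ x := (hirr.ne_rat _).symm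
  exact ⟨k, lt_of_le_of_ne hkm hne, hKP⟩

lemma exists_dn_index {p m : ℚ} {x : ℝ} (hm : p < m) (hx1 : (p:ℝ) < x) (hx2 : x < (m:ℝ))
    (hirr : Irrational x) : ∃ k, ((dn p m (k+1) : ℚ) : ℝ) < x ∧ x < ((dn p m k : ℚ) : ℝ) := by
  have hq : (0:ℝ) < x - (p:ℝ) := by linarith
  have hqm : (0:ℝ) < (m:ℝ) - (p:ℝ) := by exact_mod_cast sub_pos.mpr hm
  obtain ⟨k0, hk0⟩ := exists_pow_lt_of_lt_one (show (0:ℝ) < (x-(p:ℝ))/((m:ℝ)-(p:ℝ)) by positivity)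
    (show (1/2:ℝ) < 1 by norm_num)
  have hP0 : ((dn p m k0 : ℚ) : ℝ) < x := by
    have hhalf : ((1:ℝ)/2)^k0 = 1/2^k0 := by rw [div_pow, one_pow]
    have hlt : ((m:ℝ)-(p:ℝ)) * ((1/2:ℝ)^k0) < ((m:ℝ)-(p:ℝ)) * ((x-(p:ℝ))/((m:ℝ)-(p:ℝ))) :=
      mul_lt_mul_of_pos_left hk0 hqm
    have heq1 : ((m:ℝ)-(p:ℝ)) * ((x-(p:ℝ))/((m:ℝ)-(p:ℝ))) = x-(p:ℝ) := by
      field_simp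
    have heq2 : ((m:ℝ)-(p:ℝ)) * ((1/2:ℝ)^k0) = ((m:ℝ)-(p:ℝ))/2^k0 := by
      rw [hhalf]; ring
    have h9 : ((m:ℝ)-(p:ℝ))/2^k0 < x - (p:ℝ) := by
      rw [← heq2, ← heq1]; exact hlt
    rw [cast_dn]
    linarith
  have hex : ∃ k, ((dn p m k : ℚ) : ℝ) < x := ⟨k0, hP0⟩
  classical
  have hK0 : Nat.find hex ≠ 0 := by
    intro h
    have hs := Nat.find_spec hex
    rw [h, dn_zero] at hs
    linarith
  obtain ⟨k, hk⟩ := Nat.exists_eq_succ_of_ne_zero hK0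
  have hKP : ((dn p m (k+1) : ℚ) : ℝ) < x := by
    have := Nat.find_spec hex
    rwa [hk] at this
  have hkm : ¬ ((dn p m k : ℚ) : ℝ) < x :=
    Nat.find_min hex (show k < Nat.find hex by rw [hk]; exact Nat.lt_succ_self k)
  push_neg at hkm
  have hne : x ≠ ((dn p m k : ℚ) : ℝ) := hirr.ne_rat _
  exact ⟨k, hKP, lt_of_le_of_ne hkm hne⟩

lemma AI_cover : ∀ (l : List ℕ) (x : ℝ), x ∈ AI l → Irrational x → ∃ a, x ∈ AI (a :: l) := by
  intro l x hx hirr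
  cases l with
  | nil =>
    set z : ℤ := ⌊x - (eQ 0 : ℝ)⌋ with hz
    obtain ⟨a, ha⟩ := J_surj z
    refine ⟨a, ?_⟩
    rw [AI_cons]
    have hirr2 : Irrational (x - (eQ 0 : ℝ)) := hirr.sub_ratCast _
    have hfl : (z:ℝ) ≤ x - (eQ 0 : ℝ) := Int.floor_le _
    have hfl2 : x - (eQ 0 : ℝ) < z + 1 := Int.lt_floor_add_one _
    have hne : x - (eQ 0 : ℝ) ≠ (z:ℝ) := by
      intro h
      exact hirr2.ne_int z h
    have hzlt : (z:ℝ) < x - (eQ 0 : ℝ) := lt_of_le_of_ne hfl (Ne.symm hne)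
    show ((eQ 0 + (J a : ℚ) : ℚ) : ℝ) < x ∧ x < ((eQ 0 + (J a : ℚ) + 1 : ℚ) : ℝ)
    rw [ha]
    push_cast
    exact ⟨by linarith, by linarith⟩
  | cons b l' =>
    have hv : (seg (b :: l')).1 < (seg (b :: l')).2 := seg_valid _ (List.cons_ne_nil b l')
    set p := (seg (b :: l')).1
    set q := (seg (b :: l')).2
    set n := (b :: l').length
    obtain ⟨hm1, hm2⟩ := mids_mem hv n
    set m := mids p q n
    rw [AI_cons] at hx
    obtain ⟨hx1, hx2⟩ := hx
    have hxm : x ≠ (m:ℝ) := hirr.ne_rat m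
    rcases lt_or_gt_of_ne hxm with hlt | hgt
    · obtain ⟨k, hk1, hk2⟩ := exists_dn_index hm1 hx1 hlt hirr
      refine ⟨2*k+1, ?_⟩
      rw [AI_cons]
      have he : ¬ Even (2*k+1) := by rw [Nat.even_iff]; omega
      have hd : (2*k+1)/2 = k := by omega
      show ((chl p q n (2*k+1)).1 : ℝ) < x ∧ x < ((chl p q n (2*k+1)).2 : ℝ)
      unfold chl
      rw [if_neg he, hd]
      exact ⟨hk1, hk2⟩
    · obtain ⟨k, hk1, hk2⟩ := exists_up_index hm2 hgt hx2 hirr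
      refine ⟨2*k, ?_⟩
      rw [AI_cons]
      have he : Even (2*k) := ⟨k, by ring⟩
      have hd : (2*k)/2 = k := by omega
      show ((chl p q n (2*k)).1 : ℝ) < x ∧ x < ((chl p q n (2*k)).2 : ℝ)
      unfold chl
      rw [if_pos he, hd]
      exact ⟨hk1, hk2⟩

lemma AI_avoid : ∀ (l : List ℕ) (n : ℕ), l.length = n + 1 → ((eQ n : ℚ) : ℝ) ∉ AI l := by
  intro l n hlen hmem
  cases l with
  | nil => simp at hlen
  | cons a l' =>
    cases l' with
    | nil =>
      have hn : n = 0 := by simpa using hlen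
      subst hn
      rw [AI_cons] at hmem
      obtain ⟨h1, h2⟩ := hmem
      have c1 : (eQ 0 + (J a : ℚ) : ℚ) < eQ 0 := by exact_mod_cast h1
      have c2 : (eQ 0 : ℚ) < eQ 0 + (J a : ℚ) + 1 := by exact_mod_cast h2
      have : (J a : ℚ) < 0 := by linarith
      have h4 : (-1 : ℚ) < (J a : ℚ) := by linarith
      have : J a < 0 := by exact_mod_cast this
      have h5 : (-1 : ℤ) < J a := by exact_mod_cast h4
      omega
    | cons b l'' =>
      have hv : (seg (b :: l'')).1 < (seg (b :: l'')).2 := seg_valid _ (List.cons_ne_nil b l'')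
      set p := (seg (b :: l'')).1
      set q := (seg (b :: l'')).2
      have hn : (b :: l'').length = n := by simpa using hlen
      rw [AI_cons] at hmem
      have hmem2 : ((chl p q (b :: l'').length a).1 : ℝ) < ((eQ n : ℚ) : ℝ)
          ∧ ((eQ n : ℚ) : ℝ) < ((chl p q (b :: l'').length a).2 : ℝ) := hmem
      have hq1 : (chl p q (b :: l'').length a).1 < eQ n := by exact_mod_cast hmem2.1
      have hq2 : eQ n < (chl p q (b :: l'').length a).2 := by exact_mod_cast hmem2.2
      rw [hn] at hq1 hq2
      obtain ⟨hm1, hm2⟩ := mids_mem hv n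
      by_cases hin : p < eQ n ∧ eQ n < q
      · have hmval : mids p q n = eQ n := by unfold mids; rw [if_pos hin]
        revert hq1 hq2
        unfold chl
        rw [hmval]
        split_ifs
        · intro hq1 hq2
          have := up_lb (show eQ n < q from hmval ▸ hm2) (a/2)
          simp only at hq1
          linarith
        · intro hq1 hq2
          have := dn_ub (show p < eQ n from hmval ▸ hm1) (a/2)
          simp only at hq2
          linarith
      · have hout : eQ n ≤ p ∨ q ≤ eQ n := by
          by_contra hcon
          push_neg at hcon
          exact hin ⟨hcon.1, hcon.2⟩
        have hins := chl_inside hv n a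
        rcases hout with h | h
        · have := hins.1; linarith
        · have := hins.2; linarith

lemma AI_nonempty : ∀ l, (AI l).Nonempty := by
  intro l
  cases l with
  | nil => exact ⟨0, trivial⟩
  | cons a l' =>
    rw [AI_cons]
    refine nonempty_Ioo.mpr ?_
    exact_mod_cast seg_valid (a :: l') (List.cons_ne_nil a l')

theorem homeo_irr : Nonempty ((ℕ → ℕ) ≃ₜ {x : ℝ | Irrational x}) := by
  apply scheme_homeo AI {x : ℝ | Irrational x} AI_closureAntitone AI_disjoint AI_vanishing
    AI_nonempty (fun x _ => trivial)
  · intro l x hx hxT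
    exact AI_cover l x hx hxT
  · intro x
    by_contra hrat
    simp only [mem_setOf_eq, Irrational] at hrat
    rw [not_not] at hrat
    obtain ⟨r, hr⟩ := hrat
    set nn := (Denumerable.eqv ℚ) r with hnn
    have her : eQ nn = r := by simp [eQ, hnn]
    have hmem := CantorScheme.map_mem x (nn + 1)
    rw [← hr, ← her] at hmem
    exact AI_avoid _ nn (PiNat.res_length _ _) hmem
  · intro a l
    refine ⟨AI (a :: l), ?_, rfl⟩
    rw [AI_cons]
    exact isOpen_Ioo
-- c5 : scheme for cantorSet \ B1

lemma lev_pad {n m : ℕ} {y : ℝ} (hy : y ∈ lev n) (hnm : n ≤ m) : y ∈ lev m := by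
  obtain ⟨c, hc, rfl⟩ := hy
  refine ⟨fun i => if i < n then c i else 0,
    fun i => by dsimp only; split
                · exact hc _
                · exact Or.inl rfl, ?_⟩
  rw [← Finset.sum_subset (Finset.range_subset_range.mpr hnm)]
  · refine Finset.sum_congr rfl fun i hi => ?_
    dsimp only
    rw [if_pos (Finset.mem_range.mp hi)]
  · intro i _ hi
    dsimp only
    rw [if_neg (fun h => hi (Finset.mem_range.mpr h)), zero_div]

lemma third_pow (k : ℕ) : (1/3:ℝ)^k = 1/3^k := by
  rw [div_pow, one_pow]

lemma lev_append {m : ℕ} {y : ℝ} (hy : y ∈ lev m) : y + 2*(1/3:ℝ)^(m+1) ∈ lev (m+1) := by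
  obtain ⟨c, hc, rfl⟩ := hy
  refine ⟨fun i => if i < m then c i else 2,
    fun i => by dsimp only; split
                · exact hc _
                · exact Or.inr rfl, ?_⟩
  rw [Finset.sum_range_succ]
  dsimp only
  rw [if_neg (lt_irrefl m)]
  have h1 : ∑ i ∈ Finset.range m, (if i < m then c i else 2) / 3 ^ (i+1)
      = ∑ i ∈ Finset.range m, c i / 3 ^ (i+1) := by
    refine Finset.sum_congr rfl fun i hi => ?_
    rw [if_pos (Finset.mem_range.mp hi)]
  rw [h1, third_pow]
  ring

noncomputable def nod : List ℕ → ℝ × ℕ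
  | [] => (0, 0)
  | a :: l => ((nod l).1 + 2 * (1/3:ℝ)^((nod l).2 + a + 1), (nod l).2 + a + 1)

def AC : List ℕ → Set ℝ := fun l => Icc (nod l).1 ((nod l).1 + (1/3:ℝ)^((nod l).2))

lemma nod_cons (a : ℕ) (l : List ℕ) :
    nod (a :: l) = ((nod l).1 + 2 * (1/3:ℝ)^((nod l).2 + a + 1), (nod l).2 + a + 1) := rfl

lemma nod_lev : ∀ l : List ℕ, (nod l).1 ∈ lev (nod l).2 := by
  intro l
  induction l with
  | nil => exact zero_mem_lev 0
  | cons a l ih =>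
    rw [nod_cons]
    exact lev_append (lev_pad ih (by omega))

lemma nod_len : ∀ l : List ℕ, l.length ≤ (nod l).2 := by
  intro l
  induction l with
  | nil => exact le_refl 0
  | cons a l ih =>
    rw [nod_cons, List.length_cons]
    simp only
    omega

lemma AC_antitone : CantorScheme.Antitone AC := by
  intro l a
  unfold AC
  rw [nod_cons]
  simp only
  have hp : (0:ℝ) < (1/3:ℝ)^((nod l).2 + a + 1) := by positivity
  have h3 : 3 * (1/3:ℝ)^((nod l).2 + a + 1) ≤ (1/3:ℝ)^((nod l).2) := by
    have : (1/3:ℝ)^((nod l).2 + a + 1) = (1/3:ℝ)^((nod l).2 + a) * (1/3) := pow_succ _ _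
    rw [this]
    have h4 : (1/3:ℝ)^((nod l).2 + a) ≤ (1/3:ℝ)^((nod l).2) :=
      pow_le_pow_of_le_one (by norm_num) (by norm_num) (by omega)
    linarith
  apply Icc_subset_Icc
  · linarith
  · linarith

lemma AC_closureAntitone : CantorScheme.ClosureAntitone AC :=
  CantorScheme.Antitone.closureAntitone AC_antitone (fun _ => isClosed_Icc)

lemma AC_disj_lt {l : List ℕ} {i j : ℕ} (hij : i < j) (x : ℝ)
    (hxi : x ∈ AC (i :: l)) (hxj : x ∈ AC (j :: l)) : False := by
  unfold AC at hxi hxj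
  rw [nod_cons] at hxi hxj
  simp only at hxi hxj
  set b := (nod l).1
  set N := (nod l).2
  have hti : (0:ℝ) < (1/3:ℝ)^(N + i + 1) := by positivity
  have key : (1/3:ℝ)^(N + j + 1) ≤ (1/3:ℝ)^(N + i + 1) * (1/3) := by
    have : (1/3:ℝ)^(N + i + 2) = (1/3:ℝ)^(N + i + 1) * (1/3) := pow_succ _ _
    rw [← this]
    exact pow_le_pow_of_le_one (by norm_num) (by norm_num) (by omega)
  have h1 := hxj.2
  have h2 := hxi.1
  -- x ≤ b + 2 t_j + t_j = b + 3 t_j ≤ b + t_i < b + 2 t_i ≤ x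
  nlinarith [hxj.2, hxi.1]

lemma AC_disjoint : CantorScheme.Disjoint AC := by
  intro l a b hab
  rw [Set.disjoint_left]
  intro x hxa hxb
  rcases lt_or_gt_of_ne hab with h | h
  · exact AC_disj_lt h x hxa hxb
  · exact AC_disj_lt h x hxb hxa

lemma AC_vanishing : CantorScheme.VanishingDiam AC := by
  intro x
  have hbound : ∀ n : ℕ, Metric.ediam (AC (PiNat.res x n))
      ≤ ENNReal.ofReal ((1/3:ℝ)^n) := by
    intro n
    unfold AC
    rw [Real.ediam_Icc]
    apply ENNReal.ofReal_le_ofReal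
    have h1 : n ≤ (nod (PiNat.res x n)).2 := by
      have := nod_len (PiNat.res x n)
      rw [PiNat.res_length] at this
      exact this
    have h2 : (1/3:ℝ)^((nod (PiNat.res x n)).2) ≤ (1/3:ℝ)^n :=
      pow_le_pow_of_le_one (by norm_num) (by norm_num) h1
    linarith
  have htend : Filter.Tendsto (fun n : ℕ => ENNReal.ofReal ((1/3:ℝ)^n))
      Filter.atTop (nhds 0) := by
    rw [show (0 : ENNReal) = ENNReal.ofReal 0 from (ENNReal.ofReal_zero).symm]
    apply ENNReal.tendsto_ofReal
    exact tendsto_pow_atTop_nhds_zero_of_lt_one (by norm_num) (by norm_num)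
  apply tendsto_of_tendsto_of_tendsto_of_le_of_le tendsto_const_nhds htend
  · exact fun n => zero_le
  · exact hbound

lemma AC_nonempty : ∀ l, (AC l).Nonempty := by
  intro l
  refine nonempty_Icc.mpr ?_
  have : (0:ℝ) < (1/3:ℝ)^((nod l).2) := by positivity
  linarith

lemma AC_cover : ∀ (l : List ℕ) (x : ℝ), x ∈ AC l → x ∈ cantorSet \ B1 →
    ∃ a, x ∈ AC (a :: l) := by
  intro l x hx hxT
  obtain ⟨hxC, hxB⟩ := hxT
  set b := (nod l).1 with hb
  set N := (nod l).2 with hN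
  have hbB : b ∈ B1 := by
    rw [B1_eq]
    exact mem_iUnion.mpr ⟨N, nod_lev l⟩
  have hxb : b < x := lt_of_le_of_ne hx.1 (fun h => hxB (h ▸ hbB))
  have hex : ∃ k, ¬ x ≤ b + (1/3:ℝ)^(N+k) := by
    obtain ⟨k0, hk0⟩ := exists_pow_lt_of_lt_one (sub_pos.mpr hxb) (by norm_num : (1/3:ℝ) < 1)
    refine ⟨k0, ?_⟩
    push_neg
    have h1 : (1/3:ℝ)^(N+k0) ≤ (1/3:ℝ)^k0 :=
      pow_le_pow_of_le_one (by norm_num) (by norm_num) (by omega)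
    linarith
  classical
  have hK0 : Nat.find hex ≠ 0 := by
    intro h
    have hs := Nat.find_spec hex
    rw [h] at hs
    apply hs
    have h2 := hx.2
    simpa using h2
  obtain ⟨k, hk⟩ := Nat.exists_eq_succ_of_ne_zero hK0
  have hKspec : ¬ x ≤ b + (1/3:ℝ)^(N+(k+1)) := by
    have := Nat.find_spec hex
    rwa [hk] at this
  have hQk : x ≤ b + (1/3:ℝ)^(N+k) := by
    have := Nat.find_min hex (show k < Nat.find hex by rw [hk]; exact Nat.lt_succ_self k)
    rw [not_not] at this
    exact this
  push_neg at hKspec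
  -- so b + (1/3)^(N+k+1) < x ≤ b + (1/3)^(N+k)
  set M := N + k + 1 with hM
  have hyM : b + 2*(1/3:ℝ)^M ∈ lev M := by
    have hpad : b ∈ lev (N + k) := lev_pad (nod_lev l) (by omega)
    have := lev_append hpad
    rw [show N + k + 1 = M from rfl] at this
    exact this
  have hxpre : x ∈ preCantorSet M := cantor_mem_pre hxC M
  have hMp : (0:ℝ) < (1/3:ℝ)^M := by positivity
  have hsucc : (1/3:ℝ)^(N+k) = 3 * (1/3:ℝ)^M := by
    rw [hM, pow_succ]
    ring
  rcases LR M _ hyM x hxpre with h | ⟨h1, h2⟩ | h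
  · -- x ≤ b + 2(1/3)^M - (1/3)^M = b + (1/3)^M, contradiction with hKspec : b + (1/3)^(N+K=k+1)=M < x
    have h7 : x ≤ b + (1/3:ℝ)^M := by linarith
    rw [show N + (k+1) = M from by omega] at hKspec
    linarith
  · refine ⟨k, ?_⟩
    unfold AC
    rw [nod_cons]
    simp only
    rw [show (nod l).2 + k + 1 = M from rfl]
    exact ⟨by linarith, by linarith⟩
  · -- x ≥ b + 4 (1/3)^M but x ≤ b + 3 (1/3)^M
    rw [hsucc] at hQk
    linarith

lemma AC_hT : ∀ x : ((CantorScheme.inducedMap AC).1 : Set (ℕ → ℕ)),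
    (CantorScheme.inducedMap AC).2 x ∈ cantorSet \ B1 := by
  intro x
  set y := (CantorScheme.inducedMap AC).2 x with hy
  have hmem : ∀ n, y ∈ AC (PiNat.res x.1 n) := fun n => CantorScheme.map_mem x n
  set bn : ℕ → ℝ := fun n => (nod (PiNat.res x.1 n)).1 with hbn
  have hNn : ∀ n, n ≤ (nod (PiNat.res x.1 n)).2 := by
    intro n
    have := nod_len (PiNat.res x.1 n)
    rwa [PiNat.res_length] at this
  have hclose : ∀ n, 0 ≤ y - bn n ∧ y - bn n ≤ (1/3:ℝ)^n := by
    intro n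
    have h1 := (hmem n).1
    have h2 := (hmem n).2
    have h3 : (1/3:ℝ)^((nod (PiNat.res x.1 n)).2) ≤ (1/3:ℝ)^n :=
      pow_le_pow_of_le_one (by norm_num) (by norm_num) (hNn n)
    exact ⟨by linarith, by linarith⟩
  have hbnC : ∀ n, bn n ∈ cantorSet := fun n => lev_subset_cantor _ (nod_lev _)
  have htend : Filter.Tendsto bn Filter.atTop (nhds y) := by
    rw [Metric.tendsto_atTop]
    intro ε hε
    obtain ⟨k0, hk0⟩ := exists_pow_lt_of_lt_one hε (by norm_num : (1/3:ℝ) < 1)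
    refine ⟨k0, fun n hn => ?_⟩
    rw [Real.dist_eq, abs_sub_comm, abs_of_nonneg (hclose n).1]
    have h1 : (1/3:ℝ)^n ≤ (1/3:ℝ)^k0 :=
      pow_le_pow_of_le_one (by norm_num) (by norm_num) hn
    have := (hclose n).2
    linarith
  have hyC : y ∈ cantorSet :=
    isClosed_cantorSet.mem_of_tendsto htend (Filter.Eventually.of_forall hbnC)
  refine ⟨hyC, fun hyB => ?_⟩
  rw [B1_eq] at hyB
  obtain ⟨Kl, hKl⟩ := mem_iUnion.mp hyB
  set n := Kl + 1 with hn
  have hsucc : PiNat.res x.1 (n+1) = x.1 n :: PiNat.res x.1 n := PiNat.res_succ x.1 n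
  have h3 : y ∈ AC (PiNat.res x.1 (n+1)) := hmem (n+1)
  rw [hsucc] at h3
  have h4 : bn n + 2*(1/3:ℝ)^((nod (PiNat.res x.1 n)).2 + x.1 n + 1) ≤ y := by
    have := h3.1
    rw [show AC (x.1 n :: PiNat.res x.1 n)
        = Icc ((nod (PiNat.res x.1 n)).1 + 2 * (1/3:ℝ)^((nod (PiNat.res x.1 n)).2 + x.1 n + 1))
          ((nod (x.1 n :: PiNat.res x.1 n)).1 + (1/3:ℝ)^((nod (x.1 n :: PiNat.res x.1 n)).2))
        from by unfold AC; rw [nod_cons]] at h3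
    exact h3.1
  have hpos : (0:ℝ) < 2*(1/3:ℝ)^((nod (PiNat.res x.1 n)).2 + x.1 n + 1) := by positivity
  have hlt : bn n < y := by linarith
  have hKp : (0:ℝ) < (1/3:ℝ)^Kl := by positivity
  have hKs : (1/3:ℝ)^n = (1/3:ℝ)^Kl * (1/3) := pow_succ _ _
  have hcl := hclose n
  rcases LR Kl y hKl (bn n) (cantor_mem_pre (hbnC n) Kl) with h | ⟨h1, _⟩ | h
  · linarith [hcl.2]
  · linarith
  · linarith

lemma AC_hrel : ∀ (a : ℕ) (l : List ℕ), ∃ u : Set ℝ,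
    IsOpen u ∧ u ∩ (cantorSet \ B1) = AC (a :: l) ∩ (cantorSet \ B1) := by
  intro a l
  set b := (nod (a :: l)).1 with hb
  set N := (nod (a :: l)).2 with hN
  have hlev : b ∈ lev N := nod_lev _
  have hp : (0:ℝ) < (1/3:ℝ)^N := by positivity
  refine ⟨Ioo (b - (1/3:ℝ)^N) (b + 2*(1/3:ℝ)^N), isOpen_Ioo, ?_⟩
  ext z
  simp only [mem_inter_iff, mem_Ioo, mem_diff]
  constructor
  · rintro ⟨⟨hz1, hz2⟩, hzC, hzB⟩
    refine ⟨?_, hzC, hzB⟩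
    rcases LR N b hlev z (cantor_mem_pre hzC N) with h | ⟨h1, h2⟩ | h
    · linarith
    · exact ⟨h1, h2⟩
    · linarith
  · rintro ⟨⟨hz1, hz2⟩, hzC, hzB⟩
    exact ⟨⟨by linarith, by linarith⟩, hzC, hzB⟩

theorem homeo_cb : Nonempty ((ℕ → ℕ) ≃ₜ (cantorSet \ B1 : Set ℝ)) := by
  apply scheme_homeo AC (cantorSet \ B1) AC_closureAntitone AC_disjoint AC_vanishing
    AC_nonempty
  · intro z hz
    have h1 : z ∈ Icc (0:ℝ) 1 := cantorSet_subset_unitInterval hz.1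
    unfold AC
    show z ∈ Icc (nod []).1 ((nod []).1 + (1/3:ℝ)^((nod []).2))
    have : nod [] = ((0:ℝ), 0) := rfl
    rw [this]
    simpa using h1
  · exact fun l x hx hxT => AC_cover l x hx hxT
  · exact AC_hT
  · exact AC_hrel

end HP

open HP in
theorem closure_B1_eq_cantorSet_and_homeomorphisms :
    closure[hattori A1] B1 = cantorSet ∧
    Nonempty (@Homeomorph ↥(closure[hattori A1] B1) ↥cantorSet
      (TopologicalSpace.induced ((↑) : (closure[hattori A1] B1) → ℝ) (hattori A1))
      inferInstance) ∧
    Nonempty (@Homeomorph ↥((closure[hattori A1] B1) \ B1) ↥{x : ℝ | Irrational x}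
      (TopologicalSpace.induced ((↑) : ↥((closure[hattori A1] B1) \ B1) → ℝ) (hattori A1))
      inferInstance) := by
  have hC := HP.closure_B1
  refine ⟨hC, ?_, ?_⟩
  · rw [hC, HP.induced_eq (subset_refl cantorSet)]
    exact ⟨Homeomorph.refl _⟩
  · rw [hC, HP.induced_eq (diff_subset : cantorSet \ B1 ⊆ cantorSet)]
    obtain ⟨h1⟩ := HP.homeo_cb
    obtain ⟨h2⟩ := HP.homeo_irr
    exact ⟨h1.symm.trans h2⟩
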